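/- arXiv:1711.01438 — 2 statements merged into one kernel-verified Lean document; each statement's English description precedes it below -/
import Mathlib

section
/- Assume V satisfies (V1)–(V3) and A is bounded, continuous on the closure of Ω, and satisfies the Class 2 condition (A3). Then limsup_{ε→0⁺} Θ_ε ≤ Θ_0, where Θ_ε = inf_Γ J_ε with J_ε(U) = ∫_Ω ( (1/2)|∇U|² + A(εx,y)V(U) ) dxdy and Θ_0 = inf_Γ J_0 with J_0(U) = ∫_Ω ( (1/2)|∇U|² + A₀ V(U) ) dxdy. -/
open MeasureTheory Filter Topology
open scoped ENNReal

noncomputable section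

namespace Het

variable {d : ℕ}

/-- Points of the infinite cylinder `ℝ × ℝ^d`. -/
abbrev Pt (d : ℕ) := ℝ × EuclideanSpace ℝ (Fin d)

/-- The infinite cylinder `Ω = ℝ × D`. -/
def Omeg (D : Set (EuclideanSpace ℝ (Fin d))) : Set (Pt d) := Set.univ ×ˢ D

/-- The slab `(a,b) × D`. -/
def slab (a b : ℝ) (D : Set (EuclideanSpace ℝ (Fin d))) : Set (Pt d) := Set.Ioo a b ×ˢ D

/-- `Ω₁ = (0,1) × D`. -/
def Omeg1 (D : Set (EuclideanSpace ℝ (Fin d))) : Set (Pt d) := slab 0 1 D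

/-- The translate `(P_k U)(x,y) = U(x+k,y)`. -/
def Ptr (k : ℤ) (U : Pt d → ℝ) : Pt d → ℝ := fun p => U (p.1 + (k : ℝ), p.2)

/-- Squared euclidean norm of the (classical) gradient of `U`:
`|∇U|² = (∂ₓU)² + Σᵢ (∂_{yᵢ}U)²`. -/
def gradSq (U : Pt d → ℝ) (p : Pt d) : ℝ :=
  (fderiv ℝ U p (1, 0)) ^ 2 +
    ∑ i : Fin d, (fderiv ℝ U p (0, EuclideanSpace.single i 1)) ^ 2

/-- Pointwise inner product `∇U · ∇W`. -/
def gradDot (U W : Pt d → ℝ) (p : Pt d) : ℝ :=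
  fderiv ℝ U p (1, 0) * fderiv ℝ W p (1, 0) +
    ∑ i : Fin d, fderiv ℝ U p (0, EuclideanSpace.single i 1) *
      fderiv ℝ W p (0, EuclideanSpace.single i 1)

/-- The Laplacian `ΔU = ∂ₓₓU + Σᵢ ∂_{yᵢyᵢ}U`. -/
def lapl (U : Pt d → ℝ) (p : Pt d) : ℝ :=
  fderiv ℝ (fun q => fderiv ℝ U q (1, 0)) p (1, 0) +
    ∑ i : Fin d, fderiv ℝ (fun q => fderiv ℝ U q (0, EuclideanSpace.single i 1)) p
      (0, EuclideanSpace.single i 1)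

/-- The `L²` norm of `f` over `S`. -/
def l2norm (S : Set (Pt d)) (f : Pt d → ℝ) : ℝ := Real.sqrt (∫ p in S, f p ^ 2)

/-- `U ∈ W^{1,2}_loc(Ω)` : on every slab `(k,k+1) × D`, `U` and its gradient
are square integrable. -/
def W12loc (D : Set (EuclideanSpace ℝ (Fin d))) (U : Pt d → ℝ) : Prop :=
  ∀ k : ℤ, MemLp U 2 (volume.restrict (slab (k : ℝ) ((k : ℝ) + 1) D)) ∧
    IntegrableOn (gradSq U) (slab (k : ℝ) ((k : ℝ) + 1) D)

/-- The class `Γ`. -/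
def InGamma (D : Set (EuclideanSpace ℝ (Fin d))) (U : Pt d → ℝ) : Prop :=
  W12loc D U ∧ IntegrableOn (gradSq U) (Omeg D) ∧
  Tendsto (fun k : ℤ => l2norm (Omeg1 D) (fun p => Ptr k U p - 1)) atBot (nhds 0) ∧
  Tendsto (fun k : ℤ => l2norm (Omeg1 D) (fun p => Ptr k U p + 1)) atTop (nhds 0)

/-- The energy functional `J_B(U) = ∫_Ω (½|∇U|² + B(x,y) V(U))`, valued in `[0,∞]`. -/
def Jfun (D : Set (EuclideanSpace ℝ (Fin d))) (B : Pt d → ℝ) (V : ℝ → ℝ)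
    (U : Pt d → ℝ) : ℝ≥0∞ :=
  ∫⁻ p in Omeg D, ENNReal.ofReal (2⁻¹ * gradSq U p + B p * V (U p))

/-- `Θ_B = inf { J_B(U) : U ∈ Γ }`. -/
def Theta (D : Set (EuclideanSpace ℝ (Fin d))) (B : Pt d → ℝ) (V : ℝ → ℝ) : ℝ≥0∞ :=
  ⨅ (U : Pt d → ℝ) (_ : InGamma D U), Jfun D B V U

/-- Conditions (V1)–(V3) on the double well potential. -/
def Vconds (V : ℝ → ℝ) : Prop :=
  ContDiff ℝ 1 V ∧ V (-1) = 0 ∧ V 1 = 0 ∧ (∀ t, 0 ≤ V t) ∧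
    ∀ t, t ≠ -1 → t ≠ 1 → 0 < V t

/-- `D` is a bounded domain: open, bounded and nonempty. -/
def NiceDomain (D : Set (EuclideanSpace ℝ (Fin d))) : Prop :=
  IsOpen D ∧ Bornology.IsBounded D ∧ D.Nonempty

/-- The filter `|(x,y)| → ∞`. -/
def atInfty (d : ℕ) : Filter (Pt d) := Filter.comap (fun p : Pt d => ‖p‖) Filter.atTop

/-- `ν` is the outward unit normal vector to `∂D` at `y`. -/
def OutwardNormal (D : Set (EuclideanSpace ℝ (Fin d))) (y ν : EuclideanSpace ℝ (Fin d)) :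
    Prop :=
  ‖ν‖ = 1 ∧ ∃ ε > 0, ∀ t : ℝ, 0 < t → t < ε → y + t • ν ∉ closure D ∧ y - t • ν ∈ D

/-- The Neumann boundary condition `∂u/∂ν = 0` on `ℝ × ∂D`. -/
def NeumannBC (D : Set (EuclideanSpace ℝ (Fin d))) (U : Pt d → ℝ) : Prop :=
  ∀ (x : ℝ) (y ν : EuclideanSpace ℝ (Fin d)), y ∈ frontier D → OutwardNormal D y ν →
    fderiv ℝ U (x, y) (0, ν) = 0

/-- `u` is a heteroclinic solution from `1` to `-1` of `-Δu + B(x,y)V'(u) = 0` in `Ω`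
with the Neumann boundary condition, with limits uniform in `y ∈ D`. -/
def IsHeteroclinic (D : Set (EuclideanSpace ℝ (Fin d))) (B : Pt d → ℝ) (V : ℝ → ℝ)
    (u : Pt d → ℝ) : Prop :=
  ContDiffOn ℝ 2 u (closure (Omeg D)) ∧
  (∀ p ∈ Omeg D, -lapl u p + B p * deriv V (u p) = 0) ∧
  NeumannBC D u ∧
  (∀ ε > 0, ∃ R : ℝ, ∀ x : ℝ, ∀ y ∈ D,
    (x ≤ -R → |u (x, y) - 1| < ε) ∧ (R ≤ x → |u (x, y) + 1| < ε))

/-- Class 1: `A` is `C¹`, asymptotic at infinity to a `1`-periodic (in `x`) `C¹`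
function `Ap` (condition (A1)), with `0 < A0 = inf_Ω A ≤ A < Ap` on `Ω` (condition (A2)). -/
def Class1 (D : Set (EuclideanSpace ℝ (Fin d))) (A Ap : Pt d → ℝ) (A0 : ℝ) : Prop :=
  ContDiffOn ℝ 1 A (closure (Omeg D)) ∧ ContDiffOn ℝ 1 Ap (closure (Omeg D)) ∧
  (∀ p : Pt d, Ap (p.1 + 1, p.2) = Ap p) ∧
  Tendsto (fun p : Pt d => A p - Ap p) (atInfty d) (nhds 0) ∧
  0 < A0 ∧ IsGLB (A '' Omeg D) A0 ∧
  ∀ p ∈ Omeg D, A p < Ap p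

/-- Class 2 (Rabinowitz): `A` is `C¹` and
`0 < A0 = A(0,y) = inf_Ω A < liminf_{|(x,y)|→∞} A = A∞ < ∞` for all `y ∈ D`. -/
def Class2 (D : Set (EuclideanSpace ℝ (Fin d))) (A : Pt d → ℝ) (A0 Ainf : ℝ) : Prop :=
  ContDiffOn ℝ 1 A (closure (Omeg D)) ∧
  0 < A0 ∧ (∀ y ∈ D, A ((0 : ℝ), y) = A0) ∧ IsGLB (A '' Omeg D) A0 ∧
  A0 < Ainf ∧ Filter.liminf A (atInfty d) = Ainf

/-- The rescaled coefficient `(x,y) ↦ A(εx, y)`. -/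
def scaleA (ε : ℝ) (A : Pt d → ℝ) : Pt d → ℝ := fun p => A (ε * p.1, p.2)

/-- Truncation of `U` to `[-1,1]`. -/
def truncU (U : Pt d → ℝ) : Pt d → ℝ := fun p => max (-1) (min 1 (U p))

/-- Weak convergence in `L²(S)`. -/
def WeakL2 (S : Set (Pt d)) (f : ℕ → Pt d → ℝ) (g : Pt d → ℝ) : Prop :=
  ∀ φ : Pt d → ℝ, MemLp φ 2 (volume.restrict S) →
    Tendsto (fun n => ∫ p in S, f n p * φ p) atTop (nhds (∫ p in S, g p * φ p))

/-- Weak convergence in `W^{1,2}(S)`: weak `L²` convergence of the functions and of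
all their (weak) partial derivatives. -/
def WeakW12 (S : Set (Pt d)) (f : ℕ → Pt d → ℝ) (g : Pt d → ℝ) : Prop :=
  WeakL2 S f g ∧
  WeakL2 S (fun n p => fderiv ℝ (f n) p (1, 0)) (fun p => fderiv ℝ g p (1, 0)) ∧
  ∀ i : Fin d, WeakL2 S (fun n p => fderiv ℝ (f n) p (0, EuclideanSpace.single i 1))
    (fun p => fderiv ℝ g p (0, EuclideanSpace.single i 1))

/-- The set of points of the cylinder whose first coordinate is an integer. -/
private lemma aux_aemeasurable_U {d : ℕ} {D : Set (EuclideanSpace ℝ (Fin d))}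
    {U : Pt d → ℝ} (hU : W12loc D U) :
    AEMeasurable U (volume.restrict (Omeg D)) := by
  set T : Set (Pt d) := ⋃ k : ℤ, slab (k : ℝ) ((k : ℝ) + 1) D with hT
  set Z : Set (Pt d) := (Set.range ((↑) : ℤ → ℝ)) ×ˢ (Set.univ : Set (EuclideanSpace ℝ (Fin d)))
    with hZdef
  have hZ0 : volume Z = 0 := by
    rw [hZdef, MeasureTheory.Measure.volume_eq_prod, MeasureTheory.Measure.prod_prod,
      (Set.countable_range ((↑) : ℤ → ℝ)).measure_zero, zero_mul]
  have hTae : AEMeasurable U (volume.restrict T) := by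
    rw [hT, aemeasurable_iUnion_iff]
    exact fun k => ((hU k).1.1).aemeasurable
  have hZae : AEMeasurable U (volume.restrict Z) := by
    rw [MeasureTheory.Measure.restrict_eq_zero.mpr hZ0]
    exact aemeasurable_zero_measure
  have hsub : Omeg D ⊆ T ∪ Z := by
    intro p hp
    by_cases hx : p.1 ∈ Set.range ((↑) : ℤ → ℝ)
    · exact Or.inr ⟨hx, Set.mem_univ _⟩
    · refine Or.inl (Set.mem_iUnion.mpr ⟨⌊p.1⌋, ?_⟩)
      refine ⟨⟨lt_of_le_of_ne (Int.floor_le p.1) ?_, Int.lt_floor_add_one p.1⟩, hp.2⟩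
      intro h
      exact hx ⟨⌊p.1⌋, h⟩
  exact ((hTae.add_measure hZae).mono_measure
    (MeasureTheory.Measure.restrict_union_le _ _)).mono_measure
    (MeasureTheory.Measure.restrict_mono hsub le_rfl)

theorem statement13 (N : ℕ) (hN : 2 ≤ N)
    (D : Set (EuclideanSpace ℝ (Fin (N - 1)))) (hD : NiceDomain D)
    (V : ℝ → ℝ) (hV : Vconds V)
    (A : Pt (N - 1) → ℝ) (A0 Ainf : ℝ) (hA : Class2 D A A0 Ainf)
    (hAbd : ∃ C : ℝ, ∀ p ∈ closure (Omeg D), |A p| ≤ C) :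
    Filter.limsup (fun ε : ℝ => Theta D (scaleA ε A) V) (nhdsWithin 0 (Set.Ioi 0)) ≤
      Theta D (fun _ => A0) V := by
  obtain ⟨C, hC⟩ := hAbd
  obtain ⟨hAc, hA0pos, hA0y, hglb, hltt, hliminf⟩ := hA
  obtain ⟨hDopen, hDbdd, hDne⟩ := hD
  have hVnn : ∀ t, 0 ≤ V t := hV.2.2.2.1
  have hVcont : Continuous V := hV.1.continuous
  set C' : ℝ := max C A0 with hC'def
  have hC'pos : 0 < C' := lt_of_lt_of_le hA0pos (le_max_right _ _)
  have hOmeas : MeasurableSet (Omeg D) := (isOpen_univ.prod hDopen).measurableSet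
  refine le_iInf₂ fun U hU => ?_
  by_cases htop : Jfun D (fun _ => A0) V U = ⊤
  · rw [htop]; exact le_top
  have hJ0lt : Jfun D (fun _ => A0) V U < ⊤ := lt_top_iff_ne_top.mpr htop
  -- measurability facts
  have hUae : AEMeasurable U (volume.restrict (Omeg D)) := aux_aemeasurable_U hU.1
  have hgnn : ∀ p, 0 ≤ gradSq U p := fun p =>
    add_nonneg (sq_nonneg _) (Finset.sum_nonneg fun i _ => sq_nonneg _)
  have hgrad : Measurable (gradSq U) := by
    apply Measurable.add
    · exact (measurable_fderiv_apply_const ℝ U _).pow_const 2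
    · exact Finset.measurable_sum _ fun i _ =>
        (measurable_fderiv_apply_const ℝ U _).pow_const 2
  have hVU : AEMeasurable (fun p => V (U p)) (volume.restrict (Omeg D)) :=
    hVcont.measurable.comp_aemeasurable hUae
  have hAmem : ∀ (ε : ℝ) (p : Pt (N-1)), p ∈ Omeg D → ((ε * p.1, p.2) : Pt (N-1)) ∈ Omeg D :=
    fun ε p hp => ⟨Set.mem_univ _, hp.2⟩
  have hAae : ∀ ε : ℝ, AEMeasurable (fun p : Pt (N-1) => A (ε * p.1, p.2))
      (volume.restrict (Omeg D)) := by
    intro ε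
    have hφ : Continuous (fun p : Pt (N-1) => ((ε * p.1, p.2) : Pt (N-1))) := by fun_prop
    have : ContinuousOn (fun p : Pt (N-1) => A (ε * p.1, p.2)) (Omeg D) :=
      hAc.continuousOn.comp hφ.continuousOn fun p hp => subset_closure (hAmem ε p hp)
    exact this.aemeasurable hOmeas
  have hFmeas : ∀ ε : ℝ, AEMeasurable
      (fun p => ENNReal.ofReal (2⁻¹ * gradSq U p + A (ε * p.1, p.2) * V (U p)))
      (volume.restrict (Omeg D)) := fun ε =>
    ENNReal.measurable_ofReal.comp_aemeasurable
      (((hgrad.const_mul 2⁻¹).aemeasurable).add ((hAae ε).mul hVU))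
  -- the dominating function
  set bound : Pt (N-1) → ℝ≥0∞ := fun p =>
    ENNReal.ofReal (2⁻¹ * gradSq U p) + ENNReal.ofReal (C' * V (U p)) with hbdef
  have h_bound : ∀ ε : ℝ, ∀ᵐ p ∂(volume.restrict (Omeg D)),
      ENNReal.ofReal (2⁻¹ * gradSq U p + A (ε * p.1, p.2) * V (U p)) ≤ bound p := by
    intro ε
    filter_upwards [MeasureTheory.ae_restrict_mem hOmeas] with p hp
    have hAle : A (ε * p.1, p.2) ≤ C' :=
      ((abs_le.mp (hC _ (subset_closure (hAmem ε p hp)))).2).trans (le_max_left _ _)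
    calc ENNReal.ofReal (2⁻¹ * gradSq U p + A (ε * p.1, p.2) * V (U p))
        ≤ ENNReal.ofReal (2⁻¹ * gradSq U p) + ENNReal.ofReal (A (ε * p.1, p.2) * V (U p)) :=
          ENNReal.ofReal_add_le
      _ ≤ bound p := add_le_add le_rfl
          (ENNReal.ofReal_le_ofReal (mul_le_mul_of_nonneg_right hAle (hVnn _)))
  have hle1 : ∫⁻ p in Omeg D, ENNReal.ofReal (2⁻¹ * gradSq U p) ≤
      Jfun D (fun _ => A0) V U :=
    MeasureTheory.lintegral_mono fun p => ENNReal.ofReal_le_ofReal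
      (le_add_of_nonneg_right (mul_nonneg hA0pos.le (hVnn _)))
  have hle2 : ∫⁻ p in Omeg D, ENNReal.ofReal (A0 * V (U p)) ≤
      Jfun D (fun _ => A0) V U :=
    MeasureTheory.lintegral_mono fun p => ENNReal.ofReal_le_ofReal
      (le_add_of_nonneg_left (mul_nonneg (by norm_num) (hgnn p)))
  have h_fin : ∫⁻ p in Omeg D, bound p ≠ ⊤ := by
    have hsplit : ∫⁻ p in Omeg D, bound p =
        (∫⁻ p in Omeg D, ENNReal.ofReal (2⁻¹ * gradSq U p)) +
          ∫⁻ p in Omeg D, ENNReal.ofReal (C' * V (U p)) :=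
      MeasureTheory.lintegral_add_left ((hgrad.const_mul 2⁻¹).ennreal_ofReal) _
    have hCV : ∀ p, ENNReal.ofReal (C' * V (U p)) =
        ENNReal.ofReal (C' / A0) * ENNReal.ofReal (A0 * V (U p)) := by
      intro p
      rw [← ENNReal.ofReal_mul (by positivity)]
      congr 1
      field_simp
    have h2 : ∫⁻ p in Omeg D, ENNReal.ofReal (C' * V (U p)) =
        ENNReal.ofReal (C' / A0) * ∫⁻ p in Omeg D, ENNReal.ofReal (A0 * V (U p)) := by
      simp_rw [hCV]
      exact MeasureTheory.lintegral_const_mul' _ _ ENNReal.ofReal_ne_top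
    rw [hsplit, h2]
    exact ENNReal.add_ne_top.mpr ⟨(lt_of_le_of_lt hle1 hJ0lt).ne,
      ENNReal.mul_ne_top ENNReal.ofReal_ne_top (lt_of_le_of_lt hle2 hJ0lt).ne⟩
  -- pointwise convergence
  have hpt : ∀ p ∈ Omeg D, Tendsto
      (fun ε : ℝ => ENNReal.ofReal (2⁻¹ * gradSq U p + A (ε * p.1, p.2) * V (U p)))
      (nhdsWithin 0 (Set.Ioi 0))
      (𝓝 (ENNReal.ofReal (2⁻¹ * gradSq U p + A0 * V (U p)))) := by
    intro p hp
    have hq0 : ((0:ℝ), p.2) ∈ Omeg D := ⟨Set.mem_univ _, hp.2⟩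
    have hAt : Tendsto (fun ε : ℝ => A (ε * p.1, p.2)) (𝓝 0) (𝓝 A0) := by
      have h1 : ContinuousWithinAt A (closure (Omeg D)) ((0:ℝ), p.2) :=
        hAc.continuousOn _ (subset_closure hq0)
      have hφ : Continuous (fun ε : ℝ => ((ε * p.1, p.2) : Pt (N-1))) := by fun_prop
      have h2 : Tendsto (fun ε : ℝ => ((ε * p.1, p.2) : Pt (N-1))) (𝓝 0)
          (nhdsWithin ((0:ℝ), p.2) (closure (Omeg D))) := by
        apply tendsto_nhdsWithin_of_tendsto_nhds_of_eventually_within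
        · exact hφ.tendsto' 0 _ (by simp)
        · exact Filter.Eventually.of_forall fun ε => subset_closure ⟨Set.mem_univ _, hp.2⟩
      have h3 := h1.tendsto.comp h2
      rwa [hA0y p.2 hp.2] at h3
    have hinner : Tendsto (fun ε : ℝ => 2⁻¹ * gradSq U p + A (ε * p.1, p.2) * V (U p))
        (nhdsWithin 0 (Set.Ioi 0)) (𝓝 (2⁻¹ * gradSq U p + A0 * V (U p))) :=
      tendsto_const_nhds.add ((hAt.mono_left nhdsWithin_le_nhds).mul tendsto_const_nhds)
    exact (ENNReal.continuous_ofReal.tendsto _).comp hinner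
  -- convergence of the energies by dominated convergence
  have key : Tendsto (fun ε : ℝ => Jfun D (scaleA ε A) V U) (nhdsWithin 0 (Set.Ioi 0))
      (𝓝 (Jfun D (fun _ => A0) V U)) := by
    refine Filter.tendsto_iff_seq_tendsto.mpr fun x hx => ?_
    have := MeasureTheory.tendsto_lintegral_of_dominated_convergence' bound
      (fun n => hFmeas (x n)) (fun n => h_bound (x n)) h_fin
      (μ := volume.restrict (Omeg D))
      (f := fun p => ENNReal.ofReal (2⁻¹ * gradSq U p + A0 * V (U p)))
      ?_
    · exact this
    · filter_upwards [MeasureTheory.ae_restrict_mem hOmeas] with p hp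
      exact (hpt p hp).comp hx
  calc Filter.limsup (fun ε : ℝ => Theta D (scaleA ε A) V) (nhdsWithin 0 (Set.Ioi 0))
      ≤ Filter.limsup (fun ε : ℝ => Jfun D (scaleA ε A) V U) (nhdsWithin 0 (Set.Ioi 0)) :=
        Filter.limsup_le_limsup (Filter.Eventually.of_forall fun ε => iInf₂_le U hU)
    _ = Jfun D (fun _ => A0) V U := key.limsup_eq

end Het
end
end

section
/- Assume V satisfies (V1)–(V3) and A satisfies the Class 1 condition (A1)–(A2). Let (U_m) ⊂ Γ satisfy J_A(U_m) → Θ_A and −1 ≤ U_m ≤ 1 almost everywhere, and let k(m) ∈ ℤ with k(m) → +∞. Set Q_m(x,y) = U_m(x − k(m), y) and suppose Q_m ⇀ W weakly in W^{1,2}((k,k+1)×D) for every k ∈ ℤ and Q_m → W almost everywhere in Ω. Then J_{A_p}(W) ≤ Θ_A. -/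
open MeasureTheory Filter Topology
open scoped ENNReal

noncomputable section

namespace Het

variable {d : ℕ}

section Helpers

variable {d : ℕ}

lemma measurable_pd (U : Pt d → ℝ) (e : Pt d) : Measurable fun p => fderiv ℝ U p e :=
  measurable_fderiv_apply_const ℝ U e

lemma key_translate (f : Pt d → ℝ) (w p : Pt d) (hf : DifferentiableAt ℝ f (p + w)) :
    HasFDerivAt (fun q => f (q + w)) (fderiv ℝ f (p + w)) p := by
  have h1 : HasFDerivAt (fun q : Pt d => q + w) (ContinuousLinearMap.id ℝ (Pt d)) p :=
    (hasFDerivAt_id p).add_const w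
  have := hf.hasFDerivAt.comp p h1
  rw [ContinuousLinearMap.comp_id] at this
  exact this

lemma fderiv_translate (U : Pt d → ℝ) (v p : Pt d) :
    fderiv ℝ (fun q => U (q + v)) p = fderiv ℝ U (p + v) := by
  by_cases h : DifferentiableAt ℝ U (p + v)
  · exact (key_translate U v p h).fderiv
  · have h2 : ¬ DifferentiableAt ℝ (fun q => U (q + v)) p := by
      intro hc
      apply h
      have hc' : DifferentiableAt ℝ (fun q => U (q + v)) ((p + v) + -v) := by
        simpa using hc
      have := (key_translate (fun q => U (q + v)) (-v) (p + v) hc').differentiableAt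
      have he : (fun q : Pt d => U (q + -v + v)) = U := by
        funext q; simp
      simpa [he] using this
    rw [fderiv_zero_of_not_differentiableAt h, fderiv_zero_of_not_differentiableAt h2]

lemma gradSq_translate (U : Pt d → ℝ) (v p : Pt d) :
    gradSq (fun q => U (q + v)) p = gradSq U (p + v) := by
  unfold gradSq
  rw [fderiv_translate]

lemma ptr_apply (c : ℤ) (U : Pt d → ℝ) (p : Pt d) :
    Ptr c U p = U (p + (((c : ℝ), 0) : Pt d)) := by
  show U (p.1 + (c:ℝ), p.2) = U (p + (((c : ℝ), 0) : Pt d))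
  congr 1
  refine Prod.ext rfl ?_
  simp

lemma measurable_gradSq (U : Pt d → ℝ) : Measurable (gradSq U) := by
  unfold gradSq
  exact ((measurable_pd U _).pow_const 2).add
    (Finset.measurable_sum _ fun i _ => (measurable_pd U _).pow_const 2)

lemma gradSq_nonneg (U : Pt d → ℝ) (p : Pt d) : 0 ≤ gradSq U p := by
  unfold gradSq
  positivity

end Helpers
section Helpers2

variable {d : ℕ} {D : Set (EuclideanSpace ℝ (Fin d))}

lemma measurableSet_slab (hD : IsOpen D) (a b : ℝ) : MeasurableSet (slab a b D) :=
  measurableSet_Ioo.prod hD.measurableSet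

lemma slab_subset_omeg (a b : ℝ) : slab a b D ⊆ Omeg D :=
  fun p hp => ⟨Set.mem_univ _, hp.2⟩

lemma volume_slab_lt_top (hD : Bornology.IsBounded D) (a b : ℝ) :
    volume (slab a b D) < ⊤ := by
  rw [slab, Measure.volume_eq_prod, Measure.prod_prod]
  exact ENNReal.mul_lt_top (by simp) hD.measure_lt_top

instance volPt_leftInv : (volume : Measure (Pt d)).IsAddLeftInvariant :=
  inferInstanceAs (((volume : Measure ℝ).prod (volume : Measure (EuclideanSpace ℝ (Fin d)))).IsAddLeftInvariant)

lemma measurePreserving_shift (v : Pt d) :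
    MeasurePreserving (fun p : Pt d => p + v) volume volume := by
  have : (fun p : Pt d => p + v) = fun p : Pt d => v + p := by
    funext p; exact add_comm _ _
  rw [this]
  exact measurePreserving_add_left volume v

lemma measurableEmbedding_shift (v : Pt d) :
    MeasurableEmbedding (fun p : Pt d => p + v) :=
  (MeasurableEquiv.addRight v).measurableEmbedding

lemma slab_preimage (a b c : ℝ) :
    (fun p : Pt d => p + ((c, 0) : Pt d)) ⁻¹' slab (a + c) (b + c) D = slab a b D := by
  ext p
  simp only [slab, Set.mem_preimage, Set.mem_prod, Set.mem_Ioo, Prod.fst_add, Prod.snd_add,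
    add_zero]
  constructor
  · rintro ⟨⟨h1, h2⟩, h3⟩
    exact ⟨⟨by linarith [h1], by linarith [h2]⟩, h3⟩
  · rintro ⟨⟨h1, h2⟩, h3⟩
    exact ⟨⟨by simpa using add_lt_add_right h1 c, by simpa using add_lt_add_right h2 c⟩, h3⟩

lemma lintegral_shift (f : Pt d → ℝ≥0∞) (v : Pt d) (s : Set (Pt d)) :
    ∫⁻ p in (fun p : Pt d => p + v) ⁻¹' s, f (p + v) = ∫⁻ p in s, f p :=
  (measurePreserving_shift v).setLIntegral_comp_preimage_emb (measurableEmbedding_shift v) f s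

end Helpers2
section Helpers3

variable {d : ℕ}

lemma enn_le_liminf_add (u v : ℕ → ℝ≥0∞) :
    Filter.atTop.liminf u + Filter.atTop.liminf v ≤
      Filter.atTop.liminf (fun m => u m + v m) := by
  rw [liminf_eq_iSup_iInf_of_nat, liminf_eq_iSup_iInf_of_nat, liminf_eq_iSup_iInf_of_nat]
  have hmon : ∀ w : ℕ → ℝ≥0∞, Monotone fun n => ⨅ i ≥ n, w i := by
    intro w n n' hnn'
    exact le_iInf₂ fun i hi => iInf₂_le i (le_trans hnn' hi)
  rw [ENNReal.iSup_add_iSup_of_monotone (hmon u) (hmon v)]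
  exact iSup_mono fun n => le_iInf₂ fun i hi =>
    add_le_add (iInf₂_le i hi) (iInf₂_le i hi)

lemma enn_liminf_sum {ι : Type*} (s : Finset ι) (f : ι → ℕ → ℝ≥0∞) :
    ∑ i ∈ s, Filter.atTop.liminf (f i) ≤
      Filter.atTop.liminf (fun m => ∑ i ∈ s, f i m) := by
  induction s using Finset.cons_induction with
  | empty => simp
  | cons a s ha ih =>
    simp only [Finset.sum_cons]
    calc Filter.atTop.liminf (f a) + ∑ i ∈ s, Filter.atTop.liminf (f i)
        ≤ Filter.atTop.liminf (f a) + Filter.atTop.liminf (fun m => ∑ i ∈ s, f i m) :=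
          add_le_add le_rfl ih
      _ ≤ _ := enn_le_liminf_add _ _

lemma weak_lsc_sq {S : Set (Pt d)} (hSfin : volume S < ⊤)
    (gm : ℕ → Pt d → ℝ) (g : Pt d → ℝ)
    (hgm : ∀ m, Measurable (gm m)) (hg : Measurable g)
    (Hw : ∀ φ : Pt d → ℝ, MemLp φ 2 (volume.restrict S) →
      Tendsto (fun m => ∫ p in S, gm m p * φ p) atTop (nhds (∫ p in S, g p * φ p))) :
    ∫⁻ p in S, ENNReal.ofReal (g p ^ 2) ≤
      Filter.atTop.liminf (fun m => ∫⁻ p in S, ENNReal.ofReal (gm m p ^ 2)) := by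
  haveI : IsFiniteMeasure (volume.restrict S) :=
    ⟨by rwa [Measure.restrict_apply_univ]⟩
  set L := Filter.atTop.liminf (fun m => ∫⁻ p in S, ENNReal.ofReal (gm m p ^ 2)) with hLdef
  have main : ∀ R : ℕ,
      (∫⁻ p in S, ENNReal.ofReal ((if |g p| ≤ (R : ℝ) then g p else 0) ^ 2)) ≤ L := by
    intro R
    set φ : Pt d → ℝ := fun p => if |g p| ≤ (R : ℝ) then g p else 0 with hφdef
    have hφm : Measurable φ :=
      Measurable.ite (measurableSet_le hg.abs measurable_const) hg measurable_const
    have hφb : ∀ p, |φ p| ≤ (R : ℝ) := by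
      intro p
      by_cases h : |g p| ≤ (R : ℝ)
      · simpa [hφdef, h] using h
      · simp [hφdef, h]
    have hφL2 : MemLp φ 2 (volume.restrict S) :=
      MemLp.of_bound hφm.aestronglyMeasurable (R : ℝ)
        (Filter.Eventually.of_forall fun p => by
          rw [Real.norm_eq_abs]; exact hφb p)
    set b := ∫⁻ p in S, ENNReal.ofReal (φ p ^ 2) with hbdef
    show b ≤ L
    have hb_fin : b ≠ ⊤ := by
      have hb_le : b ≤ ENNReal.ofReal ((R:ℝ)^2) * volume S := by
        rw [hbdef]
        refine le_trans (lintegral_mono fun p => ENNReal.ofReal_le_ofReal ?_)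
          (le_of_eq (setLIntegral_const S _))
        have h1 : |φ p| ≤ (R:ℝ) := hφb p
        have h2 : (0:ℝ) ≤ |φ p| := abs_nonneg _
        nlinarith [sq_abs (φ p)]
      exact ne_of_lt (lt_of_le_of_lt hb_le (ENNReal.mul_lt_top ENNReal.ofReal_lt_top hSfin))
    have hid : ∀ p, g p * φ p = φ p ^ 2 := by
      intro p
      by_cases h : |g p| ≤ (R : ℝ) <;> simp only [hφdef, h, if_true, if_false] <;> ring
    have h1 : (∫ p in S, g p * φ p) = b.toReal := by
      simp only [hid]
      rw [integral_eq_lintegral_of_nonneg_ae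
        (Filter.Eventually.of_forall fun p => sq_nonneg (φ p))
        ((hφm.pow_const 2).aestronglyMeasurable)]
    -- Hölder bound for each m
    have h2 : ∀ m, ENNReal.ofReal (∫ p in S, gm m p * φ p) ≤
        (∫⁻ p in S, ENNReal.ofReal (gm m p ^ 2)) ^ (1/2 : ℝ) * b ^ (1/2 : ℝ) := by
      intro m
      have e1 : ENNReal.ofReal (∫ p in S, gm m p * φ p) ≤
          ∫⁻ p in S, ENNReal.ofReal ‖gm m p * φ p‖ := by
        calc ENNReal.ofReal (∫ p in S, gm m p * φ p)
            ≤ ENNReal.ofReal ‖∫ p in S, gm m p * φ p‖ :=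
              ENNReal.ofReal_le_ofReal (by rw [Real.norm_eq_abs]; exact le_abs_self _)
          _ ≤ ENNReal.ofReal ((∫⁻ p in S, ENNReal.ofReal ‖gm m p * φ p‖).toReal) :=
              ENNReal.ofReal_le_ofReal (norm_integral_le_lintegral_norm _)
          _ ≤ _ := ENNReal.ofReal_toReal_le
      have e2 : ∫⁻ p in S, ENNReal.ofReal ‖gm m p * φ p‖ ≤
          (∫⁻ p in S, ENNReal.ofReal (gm m p ^ 2)) ^ (1/2 : ℝ) * b ^ (1/2 : ℝ) := by
        have hconj : Real.HolderConjugate 2 2 := Real.HolderConjugate.two_two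
        have heq2 : ∀ (h : Pt d → ℝ) (p : Pt d), ENNReal.ofReal |h p| ^ (2:ℝ) =
            ENNReal.ofReal (h p ^ 2) := by
          intro h p
          rw [ENNReal.ofReal_rpow_of_nonneg (abs_nonneg _) (by norm_num : (0:ℝ) ≤ 2)]
          congr 1
          rw [show ((2:ℝ)) = ((2:ℕ) : ℝ) by norm_num, Real.rpow_natCast, sq_abs]
        have hH := ENNReal.lintegral_mul_le_Lp_mul_Lq (volume.restrict S) hconj
          (f := fun p => ENNReal.ofReal |gm m p|) (g := fun p => ENNReal.ofReal |φ p|)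
          ((hgm m).abs.ennreal_ofReal.aemeasurable) (hφm.abs.ennreal_ofReal.aemeasurable)
        simp only [Pi.mul_apply, heq2] at hH
        have heq1 : (fun p => ENNReal.ofReal ‖gm m p * φ p‖) =
            fun p => ENNReal.ofReal |gm m p| * ENNReal.ofReal |φ p| := by
          funext p
          rw [Real.norm_eq_abs, abs_mul, ENNReal.ofReal_mul (abs_nonneg _)]
        rw [show (1/2 : ℝ) = 1/(2:ℝ) by norm_num]
        calc ∫⁻ p in S, ENNReal.ofReal ‖gm m p * φ p‖
            = ∫⁻ p in S, ENNReal.ofReal |gm m p| * ENNReal.ofReal |φ p| := by rw [heq1]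
          _ ≤ _ := hH
      exact le_trans e1 e2
    -- pass to the liminf
    have h3 : Tendsto (fun m => ENNReal.ofReal (∫ p in S, gm m p * φ p)) atTop (nhds b) := by
      have := (ENNReal.continuous_ofReal.tendsto _).comp (Hw φ hφL2)
      rw [Function.comp_def] at this
      rwa [h1, ENNReal.ofReal_toReal hb_fin] at this
    have h4 : b ≤ Filter.atTop.liminf
        (fun m => (∫⁻ p in S, ENNReal.ofReal (gm m p ^ 2)) ^ (1/2 : ℝ) * b ^ (1/2 : ℝ)) := by
      refine le_trans (le_of_eq h3.liminf_eq.symm) ?_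
      exact Filter.liminf_le_liminf (Filter.Eventually.of_forall h2)
    have h5 : Filter.atTop.liminf
        (fun m => (∫⁻ p in S, ENNReal.ofReal (gm m p ^ 2)) ^ (1/2 : ℝ) * b ^ (1/2 : ℝ)) =
        L ^ (1/2 : ℝ) * b ^ (1/2 : ℝ) := by
      have hC : b ^ (1/2 : ℝ) ≠ ⊤ := by
        simp [ENNReal.rpow_eq_top_iff, hb_fin]
      have hmono : Monotone (fun x : ℝ≥0∞ => x ^ (1/2 : ℝ) * b ^ (1/2 : ℝ)) :=
        fun x y hxy => mul_le_mul_left (ENNReal.rpow_le_rpow hxy (by norm_num)) _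
      have hcont : Continuous (fun x : ℝ≥0∞ => x ^ (1/2 : ℝ) * b ^ (1/2 : ℝ)) :=
        (ENNReal.continuous_mul_const hC).comp ENNReal.continuous_rpow_const
      exact (hmono.map_liminf_of_continuousAt
        (fun m => ∫⁻ p in S, ENNReal.ofReal (gm m p ^ 2)) (hcont.continuousAt)).symm
    rw [h5] at h4
    -- conclude b ≤ L
    by_cases hb0 : b = 0
    · rw [hb0]
      exact zero_le
    · have hbh : b ^ (1/2 : ℝ) ≤ L ^ (1/2 : ℝ) := by
        have hsplit : b = b ^ (1/2 : ℝ) * b ^ (1/2 : ℝ) := by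
          rw [← ENNReal.rpow_add _ _ hb0 hb_fin]
          norm_num
        nth_rewrite 1 [hsplit] at h4
        exact (ENNReal.mul_le_mul_iff_left
          (by simp [ENNReal.rpow_eq_zero_iff, hb0, hb_fin])
          (by simp [ENNReal.rpow_eq_top_iff, hb_fin, hb0])).mp h4
      have hsq := ENNReal.rpow_le_rpow hbh (by norm_num : (0:ℝ) ≤ 2)
      have e : ∀ x : ℝ≥0∞, (x ^ (1/2 : ℝ)) ^ (2:ℝ) = x := by
        intro x
        rw [← ENNReal.rpow_mul]
        norm_num
      rwa [e, e] at hsq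
  -- supremum over truncations
  have hsup : (∫⁻ p in S, ENNReal.ofReal (g p ^ 2)) =
      ⨆ R : ℕ, ∫⁻ p in S, ENNReal.ofReal ((if |g p| ≤ (R : ℝ) then g p else 0) ^ 2) := by
    rw [← lintegral_iSup]
    · refine lintegral_congr fun p => ?_
      obtain ⟨R, hR⟩ := exists_nat_ge |g p|
      apply le_antisymm
      · exact le_trans (le_of_eq (by rw [if_pos hR])) (le_iSup
          (fun R : ℕ => ENNReal.ofReal ((if |g p| ≤ (R : ℝ) then g p else 0) ^ 2)) R)
      · exact iSup_le fun R' => by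
          by_cases h : |g p| ≤ (R' : ℝ) <;> simp [h]
    · intro R
      exact (Measurable.ite (measurableSet_le hg.abs measurable_const) hg
        measurable_const).pow_const 2 |>.ennreal_ofReal
    · intro R R' hRR' p
      dsimp only
      by_cases h : |g p| ≤ (R : ℝ)
      · rw [if_pos h, if_pos (le_trans h (Nat.cast_le.mpr hRR'))]
      · simp [h]
  rw [hsup]
  exact iSup_le main

end Helpers3
section Helpers4

variable {d : ℕ} {D : Set (EuclideanSpace ℝ (Fin d))}

lemma slab_pairwise_disjoint :
    Pairwise (Function.onFun Disjoint (fun i : ℤ => slab (i : ℝ) ((i : ℝ) + 1) D)) := by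
  intro i j hij
  refine Set.disjoint_left.mpr fun p hp hq => ?_
  have h1 := hp.1
  have h2 := hq.1
  simp only [Set.mem_Ioo] at h1 h2
  rcases lt_or_gt_of_ne hij with h | h
  · have : (i : ℝ) + 1 ≤ (j : ℝ) := by exact_mod_cast Int.add_one_le_iff.mpr h
    linarith [h1.2, h2.1]
  · have : (j : ℝ) + 1 ≤ (i : ℝ) := by exact_mod_cast Int.add_one_le_iff.mpr h
    linarith [h1.1, h2.2]

lemma sum_slab_le (hD : IsOpen D) (f : Pt d → ℝ≥0∞) (G : Finset ℤ) :
    ∑ i ∈ G, ∫⁻ p in slab (i : ℝ) ((i : ℝ) + 1) D, f p ≤ ∫⁻ p in Omeg D, f p := by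
  have hdisj : (G : Set ℤ).PairwiseDisjoint (fun i : ℤ => slab (i:ℝ) ((i:ℝ)+1) D) :=
    fun i _ j _ hij => slab_pairwise_disjoint hij
  rw [← lintegral_biUnion_finset hdisj (fun i _ => measurableSet_slab hD _ _)]
  exact lintegral_mono_set (Set.iUnion₂_subset fun i _ => slab_subset_omeg _ _)

lemma lintegral_omeg_eq_tsum (hD : IsOpen D) (f : Pt d → ℝ≥0∞) :
    ∫⁻ p in Omeg D, f p = ∑' i : ℤ, ∫⁻ p in slab (i : ℝ) ((i : ℝ) + 1) D, f p := by
  have hsub : Omeg D \ (⋃ i : ℤ, slab (i:ℝ) ((i:ℝ)+1) D) ⊆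
      ⋃ i : ℤ, ({(i:ℝ)} ×ˢ (Set.univ : Set (EuclideanSpace ℝ (Fin d)))) := by
    rintro p ⟨hp, hnp⟩
    by_cases hz : p.1 = ((⌊p.1⌋ : ℤ) : ℝ)
    · exact Set.mem_iUnion.mpr ⟨⌊p.1⌋, ⟨hz, Set.mem_univ _⟩⟩
    · exfalso
      apply hnp
      refine Set.mem_iUnion.mpr ⟨⌊p.1⌋, ⟨⟨?_, Int.lt_floor_add_one p.1⟩, hp.2⟩⟩
      exact lt_of_le_of_ne (Int.floor_le p.1) (fun h => hz h.symm)
  have hnull : volume (Omeg D \ ⋃ i : ℤ, slab (i:ℝ) ((i:ℝ)+1) D) = 0 := by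
    refine measure_mono_null hsub (measure_iUnion_null fun i => ?_)
    rw [Measure.volume_eq_prod, Measure.prod_prod]
    simp
  have hae : Omeg D =ᵐ[volume] ⋃ i : ℤ, slab (i:ℝ) ((i:ℝ)+1) D := by
    rw [MeasureTheory.ae_eq_set]
    constructor
    · exact hnull
    · rw [Set.diff_eq_empty.mpr (Set.iUnion_subset fun i => slab_subset_omeg _ _)]
      simp
  calc ∫⁻ p in Omeg D, f p = ∫⁻ p in ⋃ i : ℤ, slab (i:ℝ) ((i:ℝ)+1) D, f p := by
        rw [Measure.restrict_congr_set hae]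
    _ = ∑' i : ℤ, ∫⁻ p in slab (i:ℝ) ((i:ℝ)+1) D, f p :=
        lintegral_iUnion (fun i => measurableSet_slab hD _ _) slab_pairwise_disjoint f

lemma ap_int_periodic (Ap : Pt d → ℝ) (hper : ∀ p : Pt d, Ap (p.1 + 1, p.2) = Ap p)
    (n : ℤ) (p : Pt d) : Ap (p.1 + (n : ℝ), p.2) = Ap p := by
  induction n using Int.induction_on with
  | zero => simp
  | succ n ih =>
    have h1 := hper (p.1 + (n : ℝ), p.2)
    dsimp only at h1
    push_cast at ih ⊢
    rw [show p.1 + ((n:ℝ) + 1) = p.1 + (n:ℝ) + 1 by ring, h1, ih]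
  | pred n ih =>
    have h1 := hper (p.1 + (-(n:ℝ) - 1), p.2)
    dsimp only at h1
    push_cast at ih ⊢
    rw [show p.1 + (-(n:ℝ) - 1) + 1 = p.1 + -(n:ℝ) by ring] at h1
    rw [← h1, ih]

lemma split_lintegral (hD : IsOpen D) (a b : ℝ) (U B : Pt d → ℝ) (V : ℝ → ℝ)
    (hpos : ∀ p ∈ slab a b D, 0 ≤ B p * V (U p)) :
    ∫⁻ p in slab a b D, ENNReal.ofReal (2⁻¹ * gradSq U p + B p * V (U p)) =
      (∫⁻ p in slab a b D,
        ENNReal.ofReal (((Real.sqrt 2)⁻¹ * fderiv ℝ U p (1, 0)) ^ 2)) +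
      (∑ i : Fin d, ∫⁻ p in slab a b D,
        ENNReal.ofReal (((Real.sqrt 2)⁻¹ * fderiv ℝ U p (0, EuclideanSpace.single i 1)) ^ 2)) +
      ∫⁻ p in slab a b D, ENNReal.ofReal (B p * V (U p)) := by
  have hc : ((Real.sqrt 2)⁻¹ : ℝ) ^ 2 = 2⁻¹ := by
    rw [inv_pow, Real.sq_sqrt (by norm_num : (0:ℝ) ≤ 2)]
  have hptwise : ∀ p ∈ slab a b D,
      ENNReal.ofReal (2⁻¹ * gradSq U p + B p * V (U p)) =
      (fun p => ENNReal.ofReal (((Real.sqrt 2)⁻¹ * fderiv ℝ U p (1, 0)) ^ 2) +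
        ∑ i : Fin d, ENNReal.ofReal
          (((Real.sqrt 2)⁻¹ * fderiv ℝ U p (0, EuclideanSpace.single i 1)) ^ 2) +
        ENNReal.ofReal (B p * V (U p))) p := by
    intro p hp
    have h2 : (2⁻¹ : ℝ) * gradSq U p = ((Real.sqrt 2)⁻¹ * fderiv ℝ U p (1, 0)) ^ 2 +
        ∑ i : Fin d, ((Real.sqrt 2)⁻¹ * fderiv ℝ U p (0, EuclideanSpace.single i 1)) ^ 2 := by
      unfold gradSq
      simp only [mul_pow, hc]
      rw [mul_add, Finset.mul_sum]
    rw [h2, ENNReal.ofReal_add (by positivity) (hpos p hp),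
      ENNReal.ofReal_add (sq_nonneg _) (Finset.sum_nonneg fun i _ => sq_nonneg _),
      ENNReal.ofReal_sum_of_nonneg (fun i _ => sq_nonneg _)]
  rw [setLIntegral_congr_fun (measurableSet_slab hD a b) hptwise]
  have hm0 : Measurable fun p =>
      ENNReal.ofReal (((Real.sqrt 2)⁻¹ * fderiv ℝ U p (1, 0)) ^ 2) :=
    (((measurable_pd U _).const_mul _).pow_const 2).ennreal_ofReal
  have hmi : ∀ i : Fin d, Measurable fun p =>
      ENNReal.ofReal (((Real.sqrt 2)⁻¹ * fderiv ℝ U p (0, EuclideanSpace.single i 1)) ^ 2) :=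
    fun i => (((measurable_pd U _).const_mul _).pow_const 2).ennreal_ofReal
  rw [lintegral_add_left (f := fun p =>
      ENNReal.ofReal (((Real.sqrt 2)⁻¹ * fderiv ℝ U p (1, 0)) ^ 2) + ∑ i : Fin d,
        ENNReal.ofReal (((Real.sqrt 2)⁻¹ * fderiv ℝ U p (0, EuclideanSpace.single i 1)) ^ 2))
      (hm0.add (Finset.measurable_sum _ fun i _ => hmi i)),
    lintegral_add_left hm0, lintegral_finset_sum _ (fun i _ => hmi i)]

end Helpers4
theorem statement18 (N : ℕ) (hN : 2 ≤ N)
    (D : Set (EuclideanSpace ℝ (Fin (N - 1)))) (hD : NiceDomain D)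
    (V : ℝ → ℝ) (hV : Vconds V)
    (A Ap : Pt (N - 1) → ℝ) (A0 : ℝ) (hA : Class1 D A Ap A0)
    (Useq : ℕ → Pt (N - 1) → ℝ) (hG : ∀ m, InGamma D (Useq m))
    (hJ : Tendsto (fun m => Jfun D A V (Useq m)) atTop (nhds (Theta D A V)))
    (hbd : ∀ m, ∀ᵐ p ∂(volume.restrict (Omeg D)), -1 ≤ Useq m p ∧ Useq m p ≤ 1)
    (k : ℕ → ℤ) (hk : Tendsto k atTop atTop)
    (W : Pt (N - 1) → ℝ)
    (hweak : ∀ j : ℤ, WeakW12 (slab (j : ℝ) ((j : ℝ) + 1) D)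
      (fun m => Ptr (-(k m)) (Useq m)) W)
    (hae : ∀ᵐ p ∂(volume.restrict (Omeg D)),
      Tendsto (fun m => Ptr (-(k m)) (Useq m) p) atTop (nhds (W p))) :
    Jfun D Ap V W ≤ Theta D A V := by
  obtain ⟨hDopen, hDbd, -⟩ := hD
  obtain ⟨hVc1, -, -, hVnn, -⟩ := hV
  obtain ⟨hAc1, hApc1, hper, hAasym, hA0pos, hA0glb, hAlt⟩ := hA
  set Qm : ℕ → Pt (N-1) → ℝ := fun m => Ptr (-(k m)) (Useq m) with hQdef
  set c : ℕ → ℝ := fun m => ((-(k m) : ℤ) : ℝ) with hcdef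
  have hQfun : ∀ m, Qm m = fun q => Useq m (q + ((c m, 0) : Pt (N-1))) := by
    intro m
    funext q
    exact ptr_apply (-(k m)) (Useq m) q
  have hA_nn : ∀ q ∈ Omeg D, 0 ≤ A q := fun q hq => le_trans hA0pos.le (hA0glb.1 ⟨q, hq, rfl⟩)
  have hAp_nn : ∀ q ∈ Omeg D, 0 ≤ Ap q := fun q hq => le_trans (hA_nn q hq) (hAlt q hq).le
  have hmem : ∀ (m : ℕ) (p : Pt (N-1)), p.2 ∈ D → (p + ((c m, 0) : Pt (N-1))) ∈ Omeg D := by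
    intro m p hp
    exact ⟨Set.mem_univ _, by simpa using hp⟩
  have hends1 : ∀ (j : ℤ) (m : ℕ), ((j - k m : ℤ) : ℝ) = (j : ℝ) + c m := by
    intro j m; rw [hcdef]; push_cast; ring
  have hends2 : ∀ (j : ℤ) (m : ℕ), ((j - k m : ℤ) : ℝ) + 1 = ((j : ℝ) + 1) + c m := by
    intro j m; rw [hcdef]; push_cast; ring
  -- Claim 1: translation of the slab energies
  have claim1 : ∀ (j : ℤ) (m : ℕ),
      (∫⁻ p in slab (j:ℝ) ((j:ℝ)+1) D,
        ENNReal.ofReal (2⁻¹ * gradSq (Qm m) p +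
          A (p + ((c m, 0) : Pt (N-1))) * V (Qm m p)))
      = ∫⁻ p in slab ((j - k m : ℤ):ℝ) (((j - k m : ℤ):ℝ)+1) D,
        ENNReal.ofReal (2⁻¹ * gradSq (Useq m) p + A p * V (Useq m p)) := by
    intro j m
    have hint : ∀ p : Pt (N-1),
        ENNReal.ofReal (2⁻¹ * gradSq (Qm m) p +
          A (p + ((c m, 0) : Pt (N-1))) * V (Qm m p)) =
        (fun q : Pt (N-1) => ENNReal.ofReal
          (2⁻¹ * gradSq (Useq m) q + A q * V (Useq m q))) (p + ((c m, 0) : Pt (N-1))) := by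
      intro p
      rw [hQfun m, gradSq_translate]
    calc (∫⁻ p in slab (j:ℝ) ((j:ℝ)+1) D,
          ENNReal.ofReal (2⁻¹ * gradSq (Qm m) p +
            A (p + ((c m, 0) : Pt (N-1))) * V (Qm m p)))
        = ∫⁻ p in (fun p : Pt (N-1) => p + ((c m, 0) : Pt (N-1))) ⁻¹'
            slab ((j:ℝ) + c m) (((j:ℝ)+1) + c m) D,
            (fun q : Pt (N-1) => ENNReal.ofReal
              (2⁻¹ * gradSq (Useq m) q + A q * V (Useq m q)))
              (p + ((c m, 0) : Pt (N-1))) := by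
          rw [slab_preimage]
          exact lintegral_congr hint
      _ = ∫⁻ q in slab ((j:ℝ) + c m) (((j:ℝ)+1) + c m) D,
            ENNReal.ofReal (2⁻¹ * gradSq (Useq m) q + A q * V (Useq m q)) :=
          lintegral_shift (fun q : Pt (N-1) => ENNReal.ofReal
            (2⁻¹ * gradSq (Useq m) q + A q * V (Useq m q))) ((c m, 0) : Pt (N-1))
            (slab ((j:ℝ) + c m) (((j:ℝ)+1) + c m) D)
      _ = _ := by rw [hends2 j m, hends1 j m]
  -- Claim 2: finite sums of translated slab energies are below the total energy
  have claim2 : ∀ (F : Finset ℤ) (m : ℕ),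
      (∑ j ∈ F, ∫⁻ p in slab (j:ℝ) ((j:ℝ)+1) D,
        ENNReal.ofReal (2⁻¹ * gradSq (Qm m) p +
          A (p + ((c m, 0) : Pt (N-1))) * V (Qm m p)))
      ≤ Jfun D A V (Useq m) := by
    intro F m
    have hre : (∑ j ∈ F, ∫⁻ p in slab (j:ℝ) ((j:ℝ)+1) D,
        ENNReal.ofReal (2⁻¹ * gradSq (Qm m) p +
          A (p + ((c m, 0) : Pt (N-1))) * V (Qm m p)))
        = ∑ j ∈ F, (fun i : ℤ => ∫⁻ p in slab (i:ℝ) ((i:ℝ)+1) D,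
            ENNReal.ofReal (2⁻¹ * gradSq (Useq m) p + A p * V (Useq m p))) (j - k m) :=
      Finset.sum_congr rfl fun j _ => claim1 j m
    have himg : (∑ i ∈ F.image (fun j : ℤ => j - k m),
        ∫⁻ p in slab (i:ℝ) ((i:ℝ)+1) D,
          ENNReal.ofReal (2⁻¹ * gradSq (Useq m) p + A p * V (Useq m p)))
        = ∑ j ∈ F, (fun i : ℤ => ∫⁻ p in slab (i:ℝ) ((i:ℝ)+1) D,
            ENNReal.ofReal (2⁻¹ * gradSq (Useq m) p + A p * V (Useq m p))) (j - k m) :=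
      Finset.sum_image (fun x _ y _ h => by omega)
    rw [hre, ← himg]
    exact sum_slab_le hDopen _ _
  -- Claim 3: per-slab lower semicontinuity
  have claim3 : ∀ j : ℤ,
      (∫⁻ p in slab (j:ℝ) ((j:ℝ)+1) D,
        ENNReal.ofReal (2⁻¹ * gradSq W p + Ap p * V (W p)))
      ≤ Filter.atTop.liminf (fun m => ∫⁻ p in slab (j:ℝ) ((j:ℝ)+1) D,
          ENNReal.ofReal (2⁻¹ * gradSq (Qm m) p +
            A (p + ((c m, 0) : Pt (N-1))) * V (Qm m p))) := by
    intro j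
    obtain ⟨hw0, hw1, hw2⟩ := hweak j
    have hWsplit := split_lintegral hDopen (j:ℝ) ((j:ℝ)+1) W Ap V
      (fun p hp => mul_nonneg (hAp_nn p (slab_subset_omeg _ _ hp)) (hVnn _))
    have hQsplit : (fun m => ∫⁻ p in slab (j:ℝ) ((j:ℝ)+1) D,
        ENNReal.ofReal (2⁻¹ * gradSq (Qm m) p +
          A (p + ((c m, 0) : Pt (N-1))) * V (Qm m p))) = fun m =>
        (∫⁻ p in slab (j:ℝ) ((j:ℝ)+1) D,
          ENNReal.ofReal (((Real.sqrt 2)⁻¹ * fderiv ℝ (Qm m) p (1, 0)) ^ 2)) +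
        (∑ i : Fin (N-1), ∫⁻ p in slab (j:ℝ) ((j:ℝ)+1) D,
          ENNReal.ofReal (((Real.sqrt 2)⁻¹ *
            fderiv ℝ (Qm m) p (0, EuclideanSpace.single i 1)) ^ 2)) +
        ∫⁻ p in slab (j:ℝ) ((j:ℝ)+1) D,
          ENNReal.ofReal (A (p + ((c m, 0) : Pt (N-1))) * V (Qm m p)) := by
      funext m
      exact split_lintegral hDopen (j:ℝ) ((j:ℝ)+1) (Qm m)
        (fun q => A (q + ((c m, 0) : Pt (N-1)))) V
        (fun p hp => mul_nonneg (hA_nn _ (hmem m p hp.2)) (hVnn _))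
    rw [hWsplit, hQsplit]
    -- gradient terms
    have hT0 : (∫⁻ p in slab (j:ℝ) ((j:ℝ)+1) D,
        ENNReal.ofReal (((Real.sqrt 2)⁻¹ * fderiv ℝ W p (1, 0)) ^ 2))
        ≤ Filter.atTop.liminf (fun m => ∫⁻ p in slab (j:ℝ) ((j:ℝ)+1) D,
          ENNReal.ofReal (((Real.sqrt 2)⁻¹ * fderiv ℝ (Qm m) p (1, 0)) ^ 2)) := by
      refine weak_lsc_sq (volume_slab_lt_top hDbd _ _) _ _
        (fun m => (measurable_pd (Qm m) _).const_mul _)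
        ((measurable_pd W _).const_mul _) ?_
      intro φ hφ
      have h := hw1 φ hφ
      simp only [mul_assoc]
      simp only [MeasureTheory.integral_const_mul]
      exact h.const_mul _
    have hTi : ∀ i : Fin (N-1), (∫⁻ p in slab (j:ℝ) ((j:ℝ)+1) D,
        ENNReal.ofReal (((Real.sqrt 2)⁻¹ * fderiv ℝ W p (0, EuclideanSpace.single i 1)) ^ 2))
        ≤ Filter.atTop.liminf (fun m => ∫⁻ p in slab (j:ℝ) ((j:ℝ)+1) D,
          ENNReal.ofReal (((Real.sqrt 2)⁻¹ *
            fderiv ℝ (Qm m) p (0, EuclideanSpace.single i 1)) ^ 2)) := by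
      intro i
      refine weak_lsc_sq (volume_slab_lt_top hDbd _ _) _ _
        (fun m => (measurable_pd (Qm m) _).const_mul _)
        ((measurable_pd W _).const_mul _) ?_
      intro φ hφ
      have h := hw2 i φ hφ
      simp only [mul_assoc]
      simp only [MeasureTheory.integral_const_mul]
      exact h.const_mul _
    -- potential term (Fatou)
    have hP : (∫⁻ p in slab (j:ℝ) ((j:ℝ)+1) D, ENNReal.ofReal (Ap p * V (W p)))
        ≤ Filter.atTop.liminf (fun m => ∫⁻ p in slab (j:ℝ) ((j:ℝ)+1) D,
          ENNReal.ofReal (A (p + ((c m, 0) : Pt (N-1))) * V (Qm m p))) := by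
      -- measurability of the integrands
      have hQae : ∀ m, AEMeasurable (Qm m)
          (volume.restrict (slab (j:ℝ) ((j:ℝ)+1) D)) := by
        intro m
        have hU : AEMeasurable (Useq m) (volume.restrict
            (slab ((j - k m : ℤ):ℝ) (((j - k m : ℤ):ℝ)+1) D)) :=
          ((hG m).1 (j - k m)).1.aestronglyMeasurable.aemeasurable
        have hmp : MeasurePreserving (fun p : Pt (N-1) => p + ((c m, 0) : Pt (N-1)))
            (volume.restrict (slab (j:ℝ) ((j:ℝ)+1) D))
            (volume.restrict (slab ((j - k m : ℤ):ℝ) (((j - k m : ℤ):ℝ)+1) D)) := by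
          have h5 := (measurePreserving_shift ((c m, 0) : Pt (N-1))).restrict_preimage
            (s := slab ((j - k m : ℤ):ℝ) (((j - k m : ℤ):ℝ)+1) D)
            (measurableSet_slab hDopen _ _)
          rwa [show (fun p : Pt (N-1) => p + ((c m, 0) : Pt (N-1))) ⁻¹'
              slab ((j - k m : ℤ):ℝ) (((j - k m : ℤ):ℝ)+1) D = slab (j:ℝ) ((j:ℝ)+1) D from by
            rw [hends2 j m, hends1 j m]; exact slab_preimage _ _ _] at h5
        have := hU.comp_quasiMeasurePreserving hmp.quasiMeasurePreserving
        rw [hQfun m]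
        exact this
      have hAmae : ∀ m, AEMeasurable (fun p : Pt (N-1) => A (p + ((c m, 0) : Pt (N-1))))
          (volume.restrict (slab (j:ℝ) ((j:ℝ)+1) D)) := by
        intro m
        have hcont : ContinuousOn (fun p : Pt (N-1) => A (p + ((c m, 0) : Pt (N-1))))
            (slab (j:ℝ) ((j:ℝ)+1) D) := by
          refine hAc1.continuousOn.comp
            ((continuous_add_right ((c m, 0) : Pt (N-1))).continuousOn) ?_
          intro p hp
          exact subset_closure (hmem m p hp.2)
        exact hcont.aemeasurable (measurableSet_slab hDopen _ _)
      have hmeas : ∀ m, AEMeasurable (fun p : Pt (N-1) =>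
          ENNReal.ofReal (A (p + ((c m, 0) : Pt (N-1))) * V (Qm m p)))
          (volume.restrict (slab (j:ℝ) ((j:ℝ)+1) D)) := by
        intro m
        exact ENNReal.measurable_ofReal.comp_aemeasurable
          ((hAmae m).mul (hVc1.continuous.measurable.comp_aemeasurable (hQae m)))
      refine le_trans (lintegral_mono_ae ?_) (lintegral_liminf_le' hmeas)
      have haeS : ∀ᵐ p ∂(volume.restrict (slab (j:ℝ) ((j:ℝ)+1) D)),
          Tendsto (fun m => Qm m p) atTop (nhds (W p)) :=
        ae_mono (Measure.restrict_mono (slab_subset_omeg _ _) le_rfl) hae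
      filter_upwards [haeS] with p hp
      -- pointwise : the integrand converges
      have hnorm : Tendsto (fun m => p + ((c m, 0) : Pt (N-1))) atTop (atInfty (N-1)) := by
        rw [atInfty, tendsto_comap_iff]
        have hk' : Tendsto (fun m => (k m : ℝ)) atTop atTop :=
          tendsto_intCast_atTop_atTop.comp hk
        have h1 : Tendsto (fun m => (k m : ℝ) + -p.1) atTop atTop :=
          tendsto_atTop_add_const_right _ _ hk'
        refine tendsto_atTop_mono (fun m => ?_) h1
        have hc' : c m = -(k m : ℝ) := by rw [hcdef]; push_cast; ring
        have h3 : (p + ((c m, 0) : Pt (N-1))).1 = p.1 + c m := rfl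
        calc (k m : ℝ) + -p.1 = -((p + ((c m, 0) : Pt (N-1))).1) := by rw [h3, hc']; ring
          _ ≤ |(p + ((c m, 0) : Pt (N-1))).1| := neg_le_abs _
          _ ≤ ‖p + ((c m, 0) : Pt (N-1))‖ := by
              rw [← Real.norm_eq_abs]; exact norm_fst_le _
      have hdist : Tendsto (fun m => A (p + ((c m, 0) : Pt (N-1))) -
          Ap (p + ((c m, 0) : Pt (N-1)))) atTop (nhds 0) := by
        have := hAasym.comp hnorm
        simpa [Function.comp_def] using this
      have hperiodic : ∀ m, Ap (p + ((c m, 0) : Pt (N-1))) = Ap p := by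
        intro m
        have h4 : p + ((c m, 0) : Pt (N-1)) = (p.1 + ((-(k m) : ℤ) : ℝ), p.2) := by
          refine Prod.ext ?_ ?_
          · show p.1 + c m = p.1 + ((-(k m) : ℤ) : ℝ)
            rw [hcdef]
          · show p.2 + 0 = p.2
            simp
        rw [h4]
        exact ap_int_periodic Ap hper (-(k m)) p
      have hAm : Tendsto (fun m => A (p + ((c m, 0) : Pt (N-1)))) atTop (nhds (Ap p)) := by
        have heq : (fun m => A (p + ((c m, 0) : Pt (N-1)))) = fun m =>
            (A (p + ((c m, 0) : Pt (N-1))) - Ap (p + ((c m, 0) : Pt (N-1)))) + Ap p :=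
          funext fun m => by rw [hperiodic m]; ring
        rw [heq]
        simpa using hdist.add (tendsto_const_nhds (x := Ap p))
      have hVt : Tendsto (fun m => V (Qm m p)) atTop (nhds (V (W p))) :=
        (hVc1.continuous.tendsto _).comp hp
      have hfull : Tendsto (fun m => ENNReal.ofReal
          (A (p + ((c m, 0) : Pt (N-1))) * V (Qm m p))) atTop
          (nhds (ENNReal.ofReal (Ap p * V (W p)))) :=
        (ENNReal.continuous_ofReal.tendsto _).comp (hAm.mul hVt)
      exact le_of_eq hfull.liminf_eq.symm
    -- combine
    calc (∫⁻ p in slab (j:ℝ) ((j:ℝ)+1) D,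
          ENNReal.ofReal (((Real.sqrt 2)⁻¹ * fderiv ℝ W p (1, 0)) ^ 2)) +
        (∑ i : Fin (N-1), ∫⁻ p in slab (j:ℝ) ((j:ℝ)+1) D,
          ENNReal.ofReal (((Real.sqrt 2)⁻¹ *
            fderiv ℝ W p (0, EuclideanSpace.single i 1)) ^ 2)) +
        ∫⁻ p in slab (j:ℝ) ((j:ℝ)+1) D, ENNReal.ofReal (Ap p * V (W p))
        ≤ (Filter.atTop.liminf (fun m => ∫⁻ p in slab (j:ℝ) ((j:ℝ)+1) D,
            ENNReal.ofReal (((Real.sqrt 2)⁻¹ * fderiv ℝ (Qm m) p (1, 0)) ^ 2)) +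
          ∑ i : Fin (N-1), Filter.atTop.liminf (fun m => ∫⁻ p in slab (j:ℝ) ((j:ℝ)+1) D,
            ENNReal.ofReal (((Real.sqrt 2)⁻¹ *
              fderiv ℝ (Qm m) p (0, EuclideanSpace.single i 1)) ^ 2))) +
          Filter.atTop.liminf (fun m => ∫⁻ p in slab (j:ℝ) ((j:ℝ)+1) D,
            ENNReal.ofReal (A (p + ((c m, 0) : Pt (N-1))) * V (Qm m p))) :=
          add_le_add (add_le_add hT0 (Finset.sum_le_sum fun i _ => hTi i)) hP
      _ ≤ (Filter.atTop.liminf (fun m => ∫⁻ p in slab (j:ℝ) ((j:ℝ)+1) D,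
            ENNReal.ofReal (((Real.sqrt 2)⁻¹ * fderiv ℝ (Qm m) p (1, 0)) ^ 2)) +
          Filter.atTop.liminf (fun m => ∑ i : Fin (N-1), ∫⁻ p in slab (j:ℝ) ((j:ℝ)+1) D,
            ENNReal.ofReal (((Real.sqrt 2)⁻¹ *
              fderiv ℝ (Qm m) p (0, EuclideanSpace.single i 1)) ^ 2))) +
          Filter.atTop.liminf (fun m => ∫⁻ p in slab (j:ℝ) ((j:ℝ)+1) D,
            ENNReal.ofReal (A (p + ((c m, 0) : Pt (N-1))) * V (Qm m p))) :=
          add_le_add (add_le_add le_rfl (enn_liminf_sum Finset.univ _)) le_rfl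
      _ ≤ Filter.atTop.liminf (fun m =>
            (∫⁻ p in slab (j:ℝ) ((j:ℝ)+1) D,
              ENNReal.ofReal (((Real.sqrt 2)⁻¹ * fderiv ℝ (Qm m) p (1, 0)) ^ 2)) +
            ∑ i : Fin (N-1), ∫⁻ p in slab (j:ℝ) ((j:ℝ)+1) D,
              ENNReal.ofReal (((Real.sqrt 2)⁻¹ *
                fderiv ℝ (Qm m) p (0, EuclideanSpace.single i 1)) ^ 2)) +
          Filter.atTop.liminf (fun m => ∫⁻ p in slab (j:ℝ) ((j:ℝ)+1) D,
            ENNReal.ofReal (A (p + ((c m, 0) : Pt (N-1))) * V (Qm m p))) :=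
          add_le_add (enn_le_liminf_add _ _) le_rfl
      _ ≤ _ := enn_le_liminf_add _ _
  -- assemble
  rw [← hJ.liminf_eq]
  have hJW : Jfun D Ap V W = ∑' j : ℤ, ∫⁻ p in slab (j:ℝ) ((j:ℝ)+1) D,
      ENNReal.ofReal (2⁻¹ * gradSq W p + Ap p * V (W p)) :=
    lintegral_omeg_eq_tsum hDopen _
  rw [hJW, ENNReal.tsum_eq_iSup_sum]
  refine iSup_le fun F => ?_
  calc (∑ j ∈ F, ∫⁻ p in slab (j:ℝ) ((j:ℝ)+1) D,
        ENNReal.ofReal (2⁻¹ * gradSq W p + Ap p * V (W p)))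
      ≤ ∑ j ∈ F, Filter.atTop.liminf (fun m => ∫⁻ p in slab (j:ℝ) ((j:ℝ)+1) D,
          ENNReal.ofReal (2⁻¹ * gradSq (Qm m) p +
            A (p + ((c m, 0) : Pt (N-1))) * V (Qm m p))) :=
        Finset.sum_le_sum fun j _ => claim3 j
    _ ≤ Filter.atTop.liminf (fun m => ∑ j ∈ F, ∫⁻ p in slab (j:ℝ) ((j:ℝ)+1) D,
          ENNReal.ofReal (2⁻¹ * gradSq (Qm m) p +
            A (p + ((c m, 0) : Pt (N-1))) * V (Qm m p))) := enn_liminf_sum F _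
    _ ≤ Filter.atTop.liminf (fun m => Jfun D A V (Useq m)) :=
        Filter.liminf_le_liminf (Filter.Eventually.of_forall fun m => claim2 F m)

end Het
end
end
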